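/- Let n ≥ 1, let V = ℂ(q)^n with standard basis v_1,…,v_n, and let T : V⊗V → V⊗V be the ℂ(q)-linear map with T(v_i⊗v_j) = q^{−δ_{ij}} v_j⊗v_i and T(v_j⊗v_i) = q^{δ_{ij}} v_i⊗v_j − (q−q^{−1}) v_j⊗v_i for all 1 ≤ i ≤ j ≤ n. For 1 ≤ i ≤ 3 let Ψ_i : V^{⊗4} → V^{⊗4} apply T to the i-th and (i+1)-st tensor factors, and set Ψ = Ψ_2Ψ_1Ψ_3Ψ_2 + (q−q^{−1})(Ψ_1Ψ_2Ψ_1 + Ψ_1Ψ_3Ψ_2) + (q−q^{−1})^2 Ψ_1Ψ_2. Then Ψ satisfies the cubic Hecke equation (Ψ−1)(Ψ+q^2)(Ψ+q^{−2}) = 0 on V^{⊗4}; in particular Ψ is invertible, and Ψ^{−1} = Ψ_2Ψ_1Ψ_3Ψ_2 + (q−q^{−1})(Ψ_2Ψ_3Ψ_2 + Ψ_1Ψ_3Ψ_2) + (q−q^{−1})^2 Ψ_3Ψ_2. -/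

import Mathlib

set_option synthInstance.maxHeartbeats 1000000
set_option maxHeartbeats 1000000
set_option maxSynthPendingDepth 3

noncomputable section
open TensorProduct

/-- The field `ℂ(q)` of rational functions. -/
abbrev Kq := RatFunc ℂ
/-- The variable `q`. -/
def qq : Kq := RatFunc.X

variable (n : ℕ)

/-- `V = ℂ(q)ⁿ`. -/
abbrev Vn (n : ℕ) := Fin n → Kq
/-- The standard basis vector `v_i` of `V`. -/
def sv (i : Fin n) : Vn n := Pi.basisFun Kq (Fin n) i

/-- The induced basis of `V ⊗ V`. -/
def bV2 : Module.Basis (Fin n × Fin n) Kq (Vn n ⊗[Kq] Vn n) :=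
  (Pi.basisFun Kq (Fin n)).tensorProduct (Pi.basisFun Kq (Fin n))

/-- The map `T : V ⊗ V → V ⊗ V`, defined on the standard basis by
`T(v_i ⊗ v_j) = q^{-δ_{ij}} v_j ⊗ v_i` and
`T(v_j ⊗ v_i) = q^{δ_{ij}} v_i ⊗ v_j − (q − q⁻¹) v_j ⊗ v_i` for `i ≤ j`. -/
def Tmap : Vn n ⊗[Kq] Vn n →ₗ[Kq] Vn n ⊗[Kq] Vn n :=
  (bV2 n).constr Kq fun p =>
    if p.1 ≤ p.2 then
      (if p.1 = p.2 then qq⁻¹ else 1) • (sv n p.2 ⊗ₜ[Kq] sv n p.1)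
    else
      (sv n p.2 ⊗ₜ[Kq] sv n p.1) - (qq - qq⁻¹) • (sv n p.1 ⊗ₜ[Kq] sv n p.2)

/-- `V^{⊗4}`, grouped as `(V ⊗ V) ⊗ (V ⊗ V)`. -/
abbrev V4 (n : ℕ) := (Vn n ⊗[Kq] Vn n) ⊗[Kq] (Vn n ⊗[Kq] Vn n)

/-- `Ψ₁` applies `T` to the first and second tensor factors. -/
def Psi1 : V4 n →ₗ[Kq] V4 n := TensorProduct.map (Tmap n) LinearMap.id

/-- `Ψ₃` applies `T` to the third and fourth tensor factors. -/
def Psi3 : V4 n →ₗ[Kq] V4 n := TensorProduct.map LinearMap.id (Tmap n)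

/-- Regrouping `(V⊗V)⊗(V⊗V) ≃ (V⊗(V⊗V))⊗V`, exhibiting the middle two factors. -/
def regroup : V4 n ≃ₗ[Kq] (Vn n ⊗[Kq] (Vn n ⊗[Kq] Vn n)) ⊗[Kq] Vn n :=
  (TensorProduct.assoc Kq (Vn n ⊗[Kq] Vn n) (Vn n) (Vn n)).symm ≪≫ₗ
    TensorProduct.congr (TensorProduct.assoc Kq (Vn n) (Vn n) (Vn n)) (LinearEquiv.refl Kq (Vn n))

/-- `Ψ₂` applies `T` to the second and third tensor factors. -/
def Psi2 : V4 n →ₗ[Kq] V4 n :=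
  (regroup n).symm.toLinearMap ∘ₗ
    TensorProduct.map (TensorProduct.map LinearMap.id (Tmap n)) LinearMap.id ∘ₗ
      (regroup n).toLinearMap

/-- The map `Ψ = Ψ₂Ψ₁Ψ₃Ψ₂ + (q−q⁻¹)(Ψ₁Ψ₂Ψ₁ + Ψ₁Ψ₃Ψ₂) + (q−q⁻¹)² Ψ₁Ψ₂`. -/
def PsiMap : V4 n →ₗ[Kq] V4 n :=
  Psi2 n ∘ₗ Psi1 n ∘ₗ Psi3 n ∘ₗ Psi2 n
    + (qq - qq⁻¹) • (Psi1 n ∘ₗ Psi2 n ∘ₗ Psi1 n + Psi1 n ∘ₗ Psi3 n ∘ₗ Psi2 n)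
    + (qq - qq⁻¹) ^ 2 • (Psi1 n ∘ₗ Psi2 n)

/-- The identity map of `V^{⊗4}`. -/
def idV4 : V4 n →ₗ[Kq] V4 n := LinearMap.id

/-- The candidate inverse `Ψ₂Ψ₁Ψ₃Ψ₂ + (q−q⁻¹)(Ψ₂Ψ₃Ψ₂ + Ψ₁Ψ₃Ψ₂) + (q−q⁻¹)² Ψ₃Ψ₂`. -/
def PsiInvMap : V4 n →ₗ[Kq] V4 n :=
  Psi2 n ∘ₗ Psi1 n ∘ₗ Psi3 n ∘ₗ Psi2 n
    + (qq - qq⁻¹) • (Psi2 n ∘ₗ Psi3 n ∘ₗ Psi2 n + Psi1 n ∘ₗ Psi3 n ∘ₗ Psi2 n)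
    + (qq - qq⁻¹) ^ 2 • (Psi3 n ∘ₗ Psi2 n)

lemma hq0 : (qq : Kq) ≠ 0 := RatFunc.X_ne_zero

lemma Tmap_tmul (i j : Fin n) : Tmap n (sv n i ⊗ₜ[Kq] sv n j) =
    if i ≤ j then
      (if i = j then qq⁻¹ else 1) • (sv n j ⊗ₜ[Kq] sv n i)
    else
      (sv n j ⊗ₜ[Kq] sv n i) - (qq - qq⁻¹) • (sv n i ⊗ₜ[Kq] sv n j) := by
  have h : sv n i ⊗ₜ[Kq] sv n j = bV2 n (i, j) := by
    simp [bV2, Module.Basis.tensorProduct_apply, sv]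
  rw [h, Tmap, Module.Basis.constr_basis, ← h]

lemma Tmap_lt {i j : Fin n} (h : i < j) :
    Tmap n (sv n i ⊗ₜ[Kq] sv n j) = sv n j ⊗ₜ[Kq] sv n i := by
  rw [Tmap_tmul, if_pos h.le, if_neg h.ne, one_smul]

lemma Tmap_eq (i : Fin n) :
    Tmap n (sv n i ⊗ₜ[Kq] sv n i) = qq⁻¹ • (sv n i ⊗ₜ[Kq] sv n i) := by
  rw [Tmap_tmul, if_pos le_rfl, if_pos rfl]

lemma Tmap_gt {i j : Fin n} (h : j < i) :
    Tmap n (sv n i ⊗ₜ[Kq] sv n j) =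
      (sv n j ⊗ₜ[Kq] sv n i) - (qq - qq⁻¹) • (sv n i ⊗ₜ[Kq] sv n j) := by
  rw [Tmap_tmul, if_neg (not_le.mpr h)]

lemma T_hecke : Tmap n ∘ₗ Tmap n = LinearMap.id - (qq - qq⁻¹) • Tmap n := by
  apply (bV2 n).ext
  rintro ⟨i, j⟩
  have hb : bV2 n (i, j) = sv n i ⊗ₜ[Kq] sv n j := by
    simp [bV2, Module.Basis.tensorProduct_apply, sv]
  rw [hb]
  rcases lt_trichotomy i j with h | h | h
  · simp only [LinearMap.comp_apply, LinearMap.sub_apply, LinearMap.id_apply,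
      LinearMap.smul_apply, Tmap_lt n h, Tmap_gt n h, map_sub, map_smul]

  · subst h
    simp only [LinearMap.comp_apply, LinearMap.sub_apply, LinearMap.id_apply,
      LinearMap.smul_apply, Tmap_eq, map_smul, smul_smul]
    have h1 : (qq⁻¹ * qq⁻¹ : Kq) = 1 - (qq - qq⁻¹) * qq⁻¹ := by
      have h0 : (qq : Kq) ≠ 0 := hq0
      field_simp
      ring
    rw [h1, sub_smul, one_smul]
  · simp only [LinearMap.comp_apply, LinearMap.sub_apply, LinearMap.id_apply,
      LinearMap.smul_apply, Tmap_lt n h, Tmap_gt n h, map_sub, map_smul, smul_sub, smul_smul]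


instance (priority := high) fastNatAlg : Algebra ℕ Kq := Semiring.toNatAlgebra
instance (priority := high) fastIntAlg : Algebra ℤ Kq := Ring.toIntAlgebra _
instance (priority := high) fastTowerN (M : Type*) [AddCommMonoid M] [Module Kq M] :
    IsScalarTower ℕ Kq M := AddCommMonoid.nat_isScalarTower
instance (priority := high) fastTowerZ (M : Type*) [AddCommGroup M] [Module Kq M] :
    IsScalarTower ℤ Kq M := AddCommGroup.intIsScalarTower

abbrev W3 (n : ℕ) := (Vn n ⊗[Kq] Vn n) ⊗[Kq] Vn n

def S1 : W3 n →ₗ[Kq] W3 n := LinearMap.rTensor (Vn n) (Tmap n)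

def S2 : W3 n →ₗ[Kq] W3 n :=
  (TensorProduct.assoc Kq (Vn n) (Vn n) (Vn n)).symm.toLinearMap ∘ₗ
    LinearMap.lTensor (Vn n) (Tmap n) ∘ₗ (TensorProduct.assoc Kq (Vn n) (Vn n) (Vn n)).toLinearMap

def bW3 : Module.Basis ((Fin n × Fin n) × Fin n) Kq (W3 n) :=
  (bV2 n).tensorProduct (Pi.basisFun Kq (Fin n))

open LinearMap in
lemma ybe : S1 n ∘ₗ S2 n ∘ₗ S1 n = S2 n ∘ₗ S1 n ∘ₗ S2 n := by
  have h0 : (qq : Kq) ≠ 0 := hq0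
  apply (bW3 n).ext
  rintro ⟨⟨i, j⟩, k⟩
  have hb : bW3 n ((i, j), k) = (sv n i ⊗ₜ[Kq] sv n j) ⊗ₜ[Kq] sv n k := by
    simp [bW3, bV2, Module.Basis.tensorProduct_apply, sv]
  rw [hb]
  rcases lt_trichotomy i j with hij | hij | hij
  · rcases lt_trichotomy j k with hjk | hjk | hjk
    · have hik := hij.trans hjk
      simp only [S1, S2, LinearMap.comp_apply, LinearMap.rTensor_tmul,
          LinearMap.lTensor_tmul, LinearEquiv.coe_coe, assoc_tmul, assoc_symm_tmul,
          map_add, map_sub, map_smul, tmul_add, tmul_sub, tmul_smul, add_tmul, sub_tmul,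
          ← smul_tmul', smul_smul, smul_sub, smul_add, Tmap_eq, Tmap_lt n hij, Tmap_gt n hij, Tmap_lt n hjk, Tmap_gt n hjk, Tmap_lt n hik, Tmap_gt n hik]
      try match_scalars <;> first | ring1 | (field_simp; ring1) | field_simp
    · subst hjk
      simp only [S1, S2, LinearMap.comp_apply, LinearMap.rTensor_tmul,
          LinearMap.lTensor_tmul, LinearEquiv.coe_coe, assoc_tmul, assoc_symm_tmul,
          map_add, map_sub, map_smul, tmul_add, tmul_sub, tmul_smul, add_tmul, sub_tmul,
          ← smul_tmul', smul_smul, smul_sub, smul_add, Tmap_eq, Tmap_lt n hij, Tmap_gt n hij]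
      try match_scalars <;> first | ring1 | (field_simp; ring1) | field_simp
    · rcases lt_trichotomy i k with hik | hik | hik
      ·
        simp only [S1, S2, LinearMap.comp_apply, LinearMap.rTensor_tmul,
            LinearMap.lTensor_tmul, LinearEquiv.coe_coe, assoc_tmul, assoc_symm_tmul,
            map_add, map_sub, map_smul, tmul_add, tmul_sub, tmul_smul, add_tmul, sub_tmul,
            ← smul_tmul', smul_smul, smul_sub, smul_add, Tmap_eq, Tmap_lt n hij, Tmap_gt n hij, Tmap_lt n hjk, Tmap_gt n hjk, Tmap_lt n hik, Tmap_gt n hik]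
        try match_scalars <;> first | ring1 | (field_simp; ring1) | field_simp
      · subst hik
        simp only [S1, S2, LinearMap.comp_apply, LinearMap.rTensor_tmul,
            LinearMap.lTensor_tmul, LinearEquiv.coe_coe, assoc_tmul, assoc_symm_tmul,
            map_add, map_sub, map_smul, tmul_add, tmul_sub, tmul_smul, add_tmul, sub_tmul,
            ← smul_tmul', smul_smul, smul_sub, smul_add, Tmap_eq, Tmap_lt n hij, Tmap_gt n hij, Tmap_lt n hjk, Tmap_gt n hjk]
        try match_scalars <;> first | ring1 | (field_simp; ring1) | field_simp
      ·
        simp only [S1, S2, LinearMap.comp_apply, LinearMap.rTensor_tmul,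
            LinearMap.lTensor_tmul, LinearEquiv.coe_coe, assoc_tmul, assoc_symm_tmul,
            map_add, map_sub, map_smul, tmul_add, tmul_sub, tmul_smul, add_tmul, sub_tmul,
            ← smul_tmul', smul_smul, smul_sub, smul_add, Tmap_eq, Tmap_lt n hij, Tmap_gt n hij, Tmap_lt n hjk, Tmap_gt n hjk, Tmap_lt n hik, Tmap_gt n hik]
        try match_scalars <;> first | ring1 | (field_simp; ring1) | field_simp
  · subst hij
    rcases lt_trichotomy i k with hik | hik | hik
    ·
      simp only [S1, S2, LinearMap.comp_apply, LinearMap.rTensor_tmul,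
          LinearMap.lTensor_tmul, LinearEquiv.coe_coe, assoc_tmul, assoc_symm_tmul,
          map_add, map_sub, map_smul, tmul_add, tmul_sub, tmul_smul, add_tmul, sub_tmul,
          ← smul_tmul', smul_smul, smul_sub, smul_add, Tmap_eq, Tmap_lt n hik, Tmap_gt n hik]
      try match_scalars <;> first | ring1 | (field_simp; ring1) | field_simp
    · subst hik
      simp only [S1, S2, LinearMap.comp_apply, LinearMap.rTensor_tmul,
          LinearMap.lTensor_tmul, LinearEquiv.coe_coe, assoc_tmul, assoc_symm_tmul,
          map_add, map_sub, map_smul, tmul_add, tmul_sub, tmul_smul, add_tmul, sub_tmul,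
          ← smul_tmul', smul_smul, smul_sub, smul_add, Tmap_eq, Tmap_eq]
      try match_scalars <;> first | ring1 | (field_simp; ring1) | field_simp
    ·
      simp only [S1, S2, LinearMap.comp_apply, LinearMap.rTensor_tmul,
          LinearMap.lTensor_tmul, LinearEquiv.coe_coe, assoc_tmul, assoc_symm_tmul,
          map_add, map_sub, map_smul, tmul_add, tmul_sub, tmul_smul, add_tmul, sub_tmul,
          ← smul_tmul', smul_smul, smul_sub, smul_add, Tmap_eq, Tmap_lt n hik, Tmap_gt n hik]
      try match_scalars <;> first | ring1 | (field_simp; ring1) | field_simp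
  · rcases lt_trichotomy j k with hjk | hjk | hjk
    · rcases lt_trichotomy i k with hik | hik | hik
      ·
        simp only [S1, S2, LinearMap.comp_apply, LinearMap.rTensor_tmul,
            LinearMap.lTensor_tmul, LinearEquiv.coe_coe, assoc_tmul, assoc_symm_tmul,
            map_add, map_sub, map_smul, tmul_add, tmul_sub, tmul_smul, add_tmul, sub_tmul,
            ← smul_tmul', smul_smul, smul_sub, smul_add, Tmap_eq, Tmap_lt n hij, Tmap_gt n hij, Tmap_lt n hjk, Tmap_gt n hjk, Tmap_lt n hik, Tmap_gt n hik]
        try match_scalars <;> first | ring1 | (field_simp; ring1) | field_simp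
      · subst hik
        simp only [S1, S2, LinearMap.comp_apply, LinearMap.rTensor_tmul,
            LinearMap.lTensor_tmul, LinearEquiv.coe_coe, assoc_tmul, assoc_symm_tmul,
            map_add, map_sub, map_smul, tmul_add, tmul_sub, tmul_smul, add_tmul, sub_tmul,
            ← smul_tmul', smul_smul, smul_sub, smul_add, Tmap_eq, Tmap_lt n hij, Tmap_gt n hij, Tmap_lt n hjk, Tmap_gt n hjk]
        try match_scalars <;> first | ring1 | (field_simp; ring1) | field_simp
      ·
        simp only [S1, S2, LinearMap.comp_apply, LinearMap.rTensor_tmul,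
            LinearMap.lTensor_tmul, LinearEquiv.coe_coe, assoc_tmul, assoc_symm_tmul,
            map_add, map_sub, map_smul, tmul_add, tmul_sub, tmul_smul, add_tmul, sub_tmul,
            ← smul_tmul', smul_smul, smul_sub, smul_add, Tmap_eq, Tmap_lt n hij, Tmap_gt n hij, Tmap_lt n hjk, Tmap_gt n hjk, Tmap_lt n hik, Tmap_gt n hik]
        try match_scalars <;> first | ring1 | (field_simp; ring1) | field_simp
    · subst hjk
      simp only [S1, S2, LinearMap.comp_apply, LinearMap.rTensor_tmul,
          LinearMap.lTensor_tmul, LinearEquiv.coe_coe, assoc_tmul, assoc_symm_tmul,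
          map_add, map_sub, map_smul, tmul_add, tmul_sub, tmul_smul, add_tmul, sub_tmul,
          ← smul_tmul', smul_smul, smul_sub, smul_add, Tmap_eq, Tmap_lt n hij, Tmap_gt n hij]
      try match_scalars <;> first | ring1 | (field_simp; ring1) | field_simp
    · have hik := hjk.trans hij
      simp only [S1, S2, LinearMap.comp_apply, LinearMap.rTensor_tmul,
          LinearMap.lTensor_tmul, LinearEquiv.coe_coe, assoc_tmul, assoc_symm_tmul,
          map_add, map_sub, map_smul, tmul_add, tmul_sub, tmul_smul, add_tmul, sub_tmul,
          ← smul_tmul', smul_smul, smul_sub, smul_add, Tmap_eq, Tmap_lt n hij, Tmap_gt n hij, Tmap_lt n hjk, Tmap_gt n hjk, Tmap_lt n hik, Tmap_gt n hik]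
      try match_scalars <;> first | ring1 | (field_simp; ring1) | field_simp


section conj

variable {M N : Type*} [AddCommGroup M] [AddCommGroup N] [Module Kq M] [Module Kq N]

/-- Conjugation of an endomorphism by a linear equivalence. -/
def cj (e : M ≃ₗ[Kq] N) (f : N →ₗ[Kq] N) : M →ₗ[Kq] M :=
  e.symm.toLinearMap ∘ₗ f ∘ₗ e.toLinearMap

lemma cj_comp (e : M ≃ₗ[Kq] N) (f g : N →ₗ[Kq] N) :
    cj e (f ∘ₗ g) = cj e f ∘ₗ cj e g := by
  ext x; simp [cj]

lemma cj_id (e : M ≃ₗ[Kq] N) : cj e LinearMap.id = LinearMap.id := by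
  ext x; simp [cj]

lemma cj_sub (e : M ≃ₗ[Kq] N) (f g : N →ₗ[Kq] N) :
    cj e (f - g) = cj e f - cj e g := by
  ext x; simp [cj]

lemma cj_smul (e : M ≃ₗ[Kq] N) (r : Kq) (f : N →ₗ[Kq] N) :
    cj e (r • f) = r • cj e f := by
  ext x; simp [cj]

end conj

lemma S1_hecke : S1 n ∘ₗ S1 n = LinearMap.id - (qq - qq⁻¹) • S1 n := by
  rw [S1, ← LinearMap.rTensor_comp, T_hecke, LinearMap.rTensor_sub,
    LinearMap.rTensor_smul, LinearMap.rTensor_id]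

lemma S2_eq : S2 n =
    cj (TensorProduct.assoc Kq (Vn n) (Vn n) (Vn n)) ((Tmap n).lTensor (Vn n)) := rfl

lemma S2_hecke : S2 n ∘ₗ S2 n = LinearMap.id - (qq - qq⁻¹) • S2 n := by
  rw [S2_eq, ← cj_comp, ← LinearMap.lTensor_comp, T_hecke, LinearMap.lTensor_sub,
    LinearMap.lTensor_smul, LinearMap.lTensor_id, cj_sub, cj_smul, cj_id]

/-- The regrouping `V⊗4 ≃ W3 ⊗ V`. -/
def eV4 : V4 n ≃ₗ[Kq] (W3 n) ⊗[Kq] Vn n :=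
  (TensorProduct.assoc Kq (Vn n ⊗[Kq] Vn n) (Vn n) (Vn n)).symm

/-- The basis of `V⊗4`. -/
def bV4 : Module.Basis ((Fin n × Fin n) × (Fin n × Fin n)) Kq (V4 n) :=
  (bV2 n).tensorProduct (bV2 n)

lemma bV4_apply (i j k l : Fin n) :
    bV4 n ((i, j), (k, l)) = (sv n i ⊗ₜ[Kq] sv n j) ⊗ₜ[Kq] (sv n k ⊗ₜ[Kq] sv n l) := by
  simp [bV4, bV2, Module.Basis.tensorProduct_apply, sv]

lemma psi1_cj : Psi1 n = cj (eV4 n) ((S1 n).rTensor (Vn n)) := by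
  apply (bV4 n).ext
  rintro ⟨⟨i, j⟩, ⟨k, l⟩⟩
  rw [bV4_apply]
  simp [Psi1, cj, eV4, S1, LinearMap.rTensor_tmul, assoc_tmul, assoc_symm_tmul]

lemma psi2_cj : Psi2 n = cj (eV4 n) ((S2 n).rTensor (Vn n)) := by
  apply (bV4 n).ext
  rintro ⟨⟨i, j⟩, ⟨k, l⟩⟩
  rw [bV4_apply]
  simp [Psi2, cj, eV4, S2, regroup, LinearMap.rTensor_tmul, assoc_tmul, assoc_symm_tmul,
    LinearEquiv.trans_apply, LinearEquiv.symm_trans_apply, TensorProduct.congr_tmul,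
    TensorProduct.congr_symm_tmul, TensorProduct.map_tmul]

lemma psi1_eq : Psi1 n = (Tmap n).rTensor (Vn n ⊗[Kq] Vn n) := rfl
lemma psi3_eq : Psi3 n = (Tmap n).lTensor (Vn n ⊗[Kq] Vn n) := rfl

lemma psi1_hecke : Psi1 n ∘ₗ Psi1 n = LinearMap.id - (qq - qq⁻¹) • Psi1 n := by
  rw [psi1_eq, ← LinearMap.rTensor_comp, T_hecke, LinearMap.rTensor_sub,
    LinearMap.rTensor_smul, LinearMap.rTensor_id]

lemma psi3_hecke : Psi3 n ∘ₗ Psi3 n = LinearMap.id - (qq - qq⁻¹) • Psi3 n := by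
  rw [psi3_eq, ← LinearMap.lTensor_comp, T_hecke, LinearMap.lTensor_sub,
    LinearMap.lTensor_smul, LinearMap.lTensor_id]

lemma psi2_hecke : Psi2 n ∘ₗ Psi2 n = LinearMap.id - (qq - qq⁻¹) • Psi2 n := by
  rw [psi2_cj, ← cj_comp, ← LinearMap.rTensor_comp, S2_hecke, LinearMap.rTensor_sub,
    LinearMap.rTensor_smul, LinearMap.rTensor_id, cj_sub, cj_smul, cj_id]

lemma psi13_comm : Psi1 n ∘ₗ Psi3 n = Psi3 n ∘ₗ Psi1 n := by
  rw [psi1_eq, psi3_eq, LinearMap.rTensor_comp_lTensor, LinearMap.lTensor_comp_rTensor]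

lemma psi_braid : Psi1 n ∘ₗ (Psi2 n ∘ₗ Psi1 n) = Psi2 n ∘ₗ (Psi1 n ∘ₗ Psi2 n) := by
  rw [psi1_cj, psi2_cj, ← cj_comp, ← cj_comp, ← cj_comp, ← cj_comp,
    ← LinearMap.rTensor_comp, ← LinearMap.rTensor_comp, ← LinearMap.rTensor_comp,
    ← LinearMap.rTensor_comp, ybe]

lemma cubic_of_rels {E : Type*} [Ring E] [Algebra Kq E] (a b d : E)
    (ha : a * a = 1 - (qq - qq⁻¹) • a)
    (hb : b * b = 1 - (qq - qq⁻¹) • b)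
    (hd : d * d = 1 - (qq - qq⁻¹) • d)
    (hab : a * (b * a) = b * (a * b))
    (had : a * d = d * a)
    (Ψ Ψ' : E)
    (hΨ : Ψ = b * (a * (d * b)) + (qq - qq⁻¹) • (a * (b * a) + a * (d * b))
        + (qq - qq⁻¹) ^ 2 • (a * b))
    (hΨ' : Ψ' = b * (a * (d * b)) + (qq - qq⁻¹) • (b * (d * b) + a * (d * b))
        + (qq - qq⁻¹) ^ 2 • (d * b)) :
    (Ψ - 1) * ((Ψ + qq ^ 2 • 1) * (Ψ + (qq⁻¹) ^ 2 • 1)) = 0 ∧ Ψ * Ψ' = 1 ∧ Ψ' * Ψ = 1 := by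
  have h0 : (qq : Kq) ≠ 0 := hq0
  set c : Kq := qq - qq⁻¹ with hc
  -- basic inverse relations
  have haA : a * (a + c • 1) = 1 := by
    rw [mul_add, ha, mul_smul_comm, mul_one]; abel
  have hAa : (a + c • 1) * a = 1 := by
    rw [add_mul, ha, smul_mul_assoc, one_mul]; abel
  have hbB : b * (b + c • 1) = 1 := by
    rw [mul_add, hb, mul_smul_comm, mul_one]; abel
  have hBb : (b + c • 1) * b = 1 := by
    rw [add_mul, hb, smul_mul_assoc, one_mul]; abel
  have hdD : d * (d + c • 1) = 1 := by
    rw [mul_add, hd, mul_smul_comm, mul_one]; abel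
  have hDd : (d + c • 1) * d = 1 := by
    rw [add_mul, hd, smul_mul_assoc, one_mul]; abel
  -- pointwise cancellation lemmas
  have LbB : ∀ x : E, b * ((b + c • 1) * x) = x := fun x => by
    rw [← mul_assoc, hbB, one_mul]
  have LaA : ∀ x : E, a * ((a + c • 1) * x) = x := fun x => by
    rw [← mul_assoc, haA, one_mul]
  have LAa : ∀ x : E, (a + c • 1) * (a * x) = x := fun x => by
    rw [← mul_assoc, hAa, one_mul]
  have LdD : ∀ x : E, d * ((d + c • 1) * x) = x := fun x => by
    rw [← mul_assoc, hdD, one_mul]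
  have LDd : ∀ x : E, (d + c • 1) * (d * x) = x := fun x => by
    rw [← mul_assoc, hDd, one_mul]
  -- commutation lemmas
  have hDA : (d + c • 1) * (a + c • 1) = (a + c • 1) * (d + c • 1) := by
    simp only [mul_add, add_mul, mul_smul_comm, smul_mul_assoc, had, smul_smul, smul_add, mul_one, one_mul]
    abel
  have LDA : ∀ x : E, (d + c • 1) * ((a + c • 1) * x) = (a + c • 1) * ((d + c • 1) * x) :=
    fun x => by rw [← mul_assoc, hDA, mul_assoc]
  have Lda : ∀ x : E, d * (a * x) = a * (d * x) := fun x => by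
    rw [← mul_assoc, ← had, mul_assoc]
  -- factorizations
  have hfact : Ψ = (b + c • 1) * (a * ((d + c • 1) * b)) := by
    rw [hΨ]
    simp only [mul_add, add_mul, mul_smul_comm, smul_mul_assoc, one_mul, mul_one, smul_add,
      smul_smul, pow_two, hab]
    abel
  have hfact' : Ψ' = (b + c • 1) * ((a + c • 1) * (d * b)) := by
    rw [hΨ']
    simp only [mul_add, add_mul, mul_smul_comm, smul_mul_assoc, one_mul, mul_one, smul_add,
      smul_smul, pow_two]
    abel
  -- inverses
  have hinv1 : Ψ * Ψ' = 1 := by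
    rw [hfact, hfact']
    simp only [mul_assoc, LbB, LDA, LaA, LDd]
    simpa [mul_assoc] using hBb
  have hinv2 : Ψ' * Ψ = 1 := by
    rw [hfact, hfact']
    simp only [mul_assoc, LbB, Lda, LAa, LdD]
    simpa [mul_assoc] using hBb
  -- cubic
  have hsfact : ∀ s : Kq, Ψ + s • 1 = (b + c • 1) * ((a * (d + c • 1) + s • 1) * b) := by
    intro s
    rw [hfact]
    simp only [mul_add, add_mul, mul_smul_comm, smul_mul_assoc, one_mul, mul_one, smul_add,
      smul_smul, smul_sub, hb, mul_assoc]
    match_scalars <;> ring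
  have hmfact : Ψ - 1 = (b + c • 1) * ((a * (d + c • 1) + (-1 : Kq) • 1) * b) := by
    rw [← hsfact (-1 : Kq), neg_smul, one_smul, sub_eq_add_neg]
  -- the commutative subalgebra generated by a and d
  have hcm : ∀ x ∈ ({a, d} : Set E), ∀ y ∈ ({a, d} : Set E), x * y = y * x := by
    rintro x hx y hy
    simp only [Set.mem_insert_iff, Set.mem_singleton_iff] at hx hy
    rcases hx with rfl | rfl <;> rcases hy with rfl | rfl
    · rfl
    · exact had
    · exact had.symm
    · rfl
  set S := Algebra.adjoin Kq ({a, d} : Set E) with hS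
  have hma : a ∈ S := Algebra.subset_adjoin (by simp)
  have hmd : d ∈ S := Algebra.subset_adjoin (by simp)
  set a' : S := ⟨a, hma⟩ with ha'
  set d' : S := ⟨d, hmd⟩ with hd'
  set z : S := algebraMap Kq S qq with hz
  set w : S := algebraMap Kq S qq⁻¹ with hw
  have hzw : z * w = 1 := by
    apply Subtype.ext
    simp only [hz, hw, Subalgebra.coe_mul, Subalgebra.coe_algebraMap, Subalgebra.coe_one,
      ← map_mul, mul_inv_cancel₀ h0, map_one]
  have haS : a' * a' = 1 - (z - w) * a' := by
    apply Subtype.ext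
    simp only [ha', hz, hw, Subalgebra.coe_mul, Subalgebra.coe_sub, Subalgebra.coe_one,
      Subalgebra.coe_algebraMap]
    rw [ha, hc]
    simp [Algebra.smul_def, map_sub]
  have hdS : d' * d' = 1 - (z - w) * d' := by
    apply Subtype.ext
    simp only [hd', hz, hw, Subalgebra.coe_mul, Subalgebra.coe_sub, Subalgebra.coe_one,
      Subalgebra.coe_algebraMap]
    rw [hd, hc]
    simp [Algebra.smul_def, map_sub]
  letI : CommRing ↥S := Algebra.adjoinCommRingOfComm Kq hcm
  have hXS : (a' * (d' + (z - w)) - 1) *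
      ((a' * (d' + (z - w)) + z ^ 2) * (a' * (d' + (z - w)) + w ^ 2)) = 0 := by
    linear_combination
      (((-1) * (w * w)) + ((2) * (z * w)) + ((2) * (z * w * w * w)) + ((-1) * (z * z)) + ((-4) * (z * z * w * w)) + ((2) * (z * z * z * w)) + ((2) * (d' * w)) + ((1) * (d' * w * w * w)) + ((-2) * (d' * z)) + ((-7) * (d' * z * w * w)) + ((7) * (d' * z * z * w)) + ((-1) * (d' * z * z * z)) + ((-1) * (d' * d')) + ((-2) * (d' * d' * w * w)) + ((6) * (d' * d' * z * w)) + ((-2) * (d' * d' * z * z)) + ((1) * (d' * d' * d' * w)) + ((-1) * (d' * d' * d' * z)) + ((-1) * (a' * w * w * w)) + ((3) * (a' * z * w * w)) + ((-3) * (a' * z * z * w)) + ((1) * (a' * z * z * z)) + ((3) * (a' * d' * w * w)) + ((-6) * (a' * d' * z * w)) + ((3) * (a' * d' * z * z)) + ((-3) * (a' * d' * d' * w)) + ((3) * (a' * d' * d' * z)) + ((1) * (a' * d' * d' * d'))) * haS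
      + (((-1) * (1)) + ((-1) * (w * w)) + ((4) * (z * w)) + ((-1) * (z * z)) + ((1) * (d' * w)) + ((-1) * (d' * z)) + ((-3) * (a' * w)) + ((-1) * (a' * w * w * w)) + ((3) * (a' * z)) + ((5) * (a' * z * w * w)) + ((-5) * (a' * z * z * w)) + ((1) * (a' * z * z * z)) + ((1) * (a' * d')) + ((1) * (a' * d' * w * w)) + ((-2) * (a' * d' * z * w)) + ((1) * (a' * d' * z * z))) * hdS
      + (((1) * (1)) + ((2) * (w * w)) + ((-5) * (z * w)) + ((2) * (z * z)) + ((-2) * (d' * w)) + ((2) * (d' * z)) + ((3) * (a' * w)) + ((2) * (a' * w * w * w)) + ((-3) * (a' * z)) + ((-7) * (a' * z * w * w)) + ((7) * (a' * z * z * w)) + ((-2) * (a' * z * z * z)) + ((-1) * (a' * d')) + ((-2) * (a' * d' * w * w)) + ((5) * (a' * d' * z * w)) + ((-2) * (a' * d' * z * z))) * hzw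
  have hXcubic : (a * (d + c • 1) + (-1 : Kq) • 1) *
      ((a * (d + c • 1) + qq ^ 2 • 1) * (a * (d + c • 1) + (qq⁻¹) ^ 2 • 1)) = 0 := by
    have h := congrArg (Subtype.val) hXS
    simp only [Subalgebra.coe_mul, Subalgebra.coe_add, Subalgebra.coe_sub, Subalgebra.coe_one,
      Subalgebra.coe_zero, Subalgebra.coe_pow, ha', hd', hz, hw, Subalgebra.coe_algebraMap,
      Algebra.algebraMap_eq_smul_one, smul_pow, one_pow, SetLike.val_smul] at h
    have e1 : ((qq • (1 : E) - qq⁻¹ • 1)) = c • 1 := by rw [hc, sub_smul]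
    have e2 : ((qq ^ 2) • (1 : E)) = qq ^ 2 • 1 := rfl
    rw [e1] at h
    calc (a * (d + c • 1) + (-1 : Kq) • 1) *
          ((a * (d + c • 1) + qq ^ 2 • 1) * (a * (d + c • 1) + (qq⁻¹) ^ 2 • 1))
        = (a * (d + c • 1) - 1) *
          ((a * (d + c • 1) + qq ^ 2 • 1) * (a * (d + c • 1) + (qq⁻¹) ^ 2 • 1)) := by
          rw [neg_smul, one_smul, sub_eq_add_neg]
      _ = 0 := h
  refine ⟨?_, hinv1, hinv2⟩
  rw [hmfact, hsfact (qq ^ 2), hsfact ((qq⁻¹) ^ 2)]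
  simp only [mul_assoc, LbB]
  have hre : (a * (d + c • 1) + (-1 : Kq) • 1) *
      ((a * (d + c • 1) + qq ^ 2 • 1) * ((a * (d + c • 1) + (qq⁻¹) ^ 2 • 1) * b)) =
      ((a * (d + c • 1) + (-1 : Kq) • 1) *
        ((a * (d + c • 1) + qq ^ 2 • 1) * (a * (d + c • 1) + (qq⁻¹) ^ 2 • 1))) * b := by
    simp only [mul_assoc]
  rw [hre, hXcubic, zero_mul, mul_zero]


/-- **Ψ satisfies the cubic Hecke equation** `(Ψ−1)(Ψ+q²)(Ψ+q⁻²) = 0` on `V^{⊗4}`;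
in particular `Ψ` is invertible with the stated inverse. -/
theorem Psi_cubic_Hecke (n : ℕ) (hn : 1 ≤ n) :
    ((PsiMap n - idV4 n) ∘ₗ (PsiMap n + qq ^ 2 • idV4 n) ∘ₗ
        (PsiMap n + (qq⁻¹) ^ 2 • idV4 n) = 0) ∧
    Function.Bijective (PsiMap n) ∧
    (PsiMap n ∘ₗ PsiInvMap n = idV4 n ∧ PsiInvMap n ∘ₗ PsiMap n = idV4 n) := by
  have ha : (Psi1 n : Module.End Kq (V4 n)) * Psi1 n = 1 - (qq - qq⁻¹) • Psi1 n :=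
    psi1_hecke n
  have hb : (Psi2 n : Module.End Kq (V4 n)) * Psi2 n = 1 - (qq - qq⁻¹) • Psi2 n :=
    psi2_hecke n
  have hd : (Psi3 n : Module.End Kq (V4 n)) * Psi3 n = 1 - (qq - qq⁻¹) • Psi3 n :=
    psi3_hecke n
  have hab : (Psi1 n : Module.End Kq (V4 n)) * (Psi2 n * Psi1 n) = Psi2 n * (Psi1 n * Psi2 n) :=
    psi_braid n
  have had : (Psi1 n : Module.End Kq (V4 n)) * Psi3 n = Psi3 n * Psi1 n :=
    psi13_comm n
  obtain ⟨hcube, hri, hle⟩ :=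
    cubic_of_rels (Psi1 n) (Psi2 n) (Psi3 n) ha hb hd hab had (PsiMap n) (PsiInvMap n) rfl rfl
  refine ⟨hcube, ?_, hri, hle⟩
  have h1 : ∀ v, PsiInvMap n (PsiMap n v) = v := fun v => by
    have := DFunLike.congr_fun hle v
    simpa using this
  have h2 : ∀ v, PsiMap n (PsiInvMap n v) = v := fun v => by
    have := DFunLike.congr_fun hri v
    simpa using this
  constructor
  · intro x y hxy
    rw [← h1 x, ← h1 y, hxy]
  · intro y
    exact ⟨PsiInvMap n y, h2 y⟩

end
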